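/- Renewal relationship for discounted performance (Proposition 1, closed-loop finite-state form). Let S be a nonempty finite state space, P a Markov kernel from S to S (the closed-loop transition kernel of an MDP under a fixed stationary policy), r : S × S → ℝ a reward function, γ ∈ (0,1) a discount factor, and s₀ ∈ S a designated start state. Let μ be the trajectory law of the Markov chain (X_t)_{t≥0} started at s₀ with transition kernel P (the Ionescu–Tulcea / Kernel.traj measure), and let τ = inf{t ≥ 1 : X_t = s₀} be the first return time to s₀. Assume τ < ∞ μ-almost surely. Define J = E_μ[∑_{t=0}^∞ γ^t r(X_t, X_{t+1})], R = E_μ[∑_{t=0}^{τ−1} γ^t r(X_t, X_{t+1})], and T = E_μ[∑_{t=0}^{τ−1} γ^t]. Then T > 0 and J = R / ((1 − γ) T). -/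

import Mathlib

open scoped Classical
open MeasureTheory Finset

namespace RenewalAux

variable {S : Type*} [Fintype S]

/-- Weighted path distribution. -/
noncomputable def vvec (P : S → S → ℝ) (s₀ : S) (g : S → ℝ) : ℕ → S → ℝ
  | 0, s => if s = s₀ then 1 else 0
  | (t+1), s => g s * ∑ s', vvec P s₀ g t s' * P s' s

@[simp] lemma vvec_zero (P : S → S → ℝ) (s₀ : S) (g : S → ℝ) (s : S) :
    vvec P s₀ g 0 s = if s = s₀ then 1 else 0 := rfl

@[simp] lemma vvec_succ (P : S → S → ℝ) (s₀ : S) (g : S → ℝ) (t : ℕ) (s : S) :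
    vvec P s₀ g (t+1) s = g s * ∑ s', vvec P s₀ g t s' * P s' s := rfl

/-- gate killing returns to `s₀`. -/
noncomputable def gate (s₀ : S) : S → ℝ := fun s => if s = s₀ then 0 else 1

/-- first-return mass at time `t`. -/
noncomputable def fret (P : S → S → ℝ) (s₀ : S) : ℕ → ℝ
  | 0 => 0
  | (t+1) => ∑ s', vvec P s₀ (gate s₀) t s' * P s' s₀

lemma renewal (P : S → S → ℝ) (s₀ : S) :
    ∀ (t : ℕ) (s : S),
      vvec P s₀ (fun _ => 1) t s
        = vvec P s₀ (gate s₀) t s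
          + ∑ k ∈ range (t+1), fret P s₀ k * vvec P s₀ (fun _ => 1) (t - k) s := by
  intro t
  induction t with
  | zero => intro s; simp [fret]
  | succ t ih =>
      intro s
      have h1 : vvec P s₀ (fun _ => 1) (t+1) s
          = ∑ s', vvec P s₀ (fun _ => 1) t s' * P s' s := by
        simp
      rw [h1]
      have h2 : ∀ s', vvec P s₀ (fun _ => 1) t s' * P s' s
          = vvec P s₀ (gate s₀) t s' * P s' s
            + ∑ k ∈ range (t+1),
                fret P s₀ k * (vvec P s₀ (fun _ => 1) (t - k) s' * P s' s) := by
        intro s'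
        rw [ih s', add_mul, Finset.sum_mul]
        congr 1
        exact Finset.sum_congr rfl fun k hk => by ring
      rw [Finset.sum_congr rfl fun s' _ => h2 s', Finset.sum_add_distrib]
      rw [Finset.sum_comm]
      have h3 : ∀ k ∈ range (t+1),
          ∑ s', fret P s₀ k * (vvec P s₀ (fun _ => 1) (t - k) s' * P s' s)
            = fret P s₀ k * vvec P s₀ (fun _ => 1) (t + 1 - k) s := by
        intro k hk
        rw [mem_range] at hk
        have hk' : t + 1 - k = (t - k) + 1 := by omega
        rw [hk', ← Finset.mul_sum]
        congr 1
        simp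
      rw [Finset.sum_congr rfl h3]
      have h4 : ∑ s', vvec P s₀ (gate s₀) t s' * P s' s
          = vvec P s₀ (gate s₀) (t+1) s
            + fret P s₀ (t+1) * vvec P s₀ (fun _ => 1) 0 s := by
        by_cases hs : s = s₀
        · subst hs
          simp [fret, gate]
        · simp [fret, gate, hs]
      rw [h4]
      conv_rhs => rw [Finset.sum_range_succ]
      simp only [Nat.sub_self]
      ring

lemma vvec_nonneg (P : S → S → ℝ) (s₀ : S) (g : S → ℝ) (hP0 : ∀ s s', 0 ≤ P s s')
    (hg : ∀ s, 0 ≤ g s) : ∀ t s, 0 ≤ vvec P s₀ g t s := by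
  intro t
  induction t with
  | zero => intro s; simp; positivity
  | succ t ih =>
      intro s
      simp only [vvec_succ]
      exact mul_nonneg (hg s) (Finset.sum_nonneg fun s' _ => mul_nonneg (ih s') (hP0 s' s))

lemma sum_vvec_one (P : S → S → ℝ) (s₀ : S) (hP1 : ∀ s, ∑ s', P s s' = 1) :
    ∀ t, ∑ s, vvec P s₀ (fun _ => 1) t s = 1 := by
  intro t
  induction t with
  | zero => simp
  | succ t ih =>
      simp only [vvec_succ, one_mul]
      rw [Finset.sum_comm]
      simp_rw [← Finset.mul_sum, hP1, mul_one]
      exact ih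

lemma sum_vvec_gate_le (P : S → S → ℝ) (s₀ : S) (hP0 : ∀ s s', 0 ≤ P s s')
    (hP1 : ∀ s, ∑ s', P s s' = 1) :
    ∀ t, ∑ s, vvec P s₀ (gate s₀) t s ≤ 1 := by
  intro t
  induction t with
  | zero => simp
  | succ t ih =>
      simp only [vvec_succ]
      have key : ∀ s, gate s₀ s * ∑ s', vvec P s₀ (gate s₀) t s' * P s' s
          ≤ ∑ s', vvec P s₀ (gate s₀) t s' * P s' s := by
        intro s
        have h1 : 0 ≤ ∑ s', vvec P s₀ (gate s₀) t s' * P s' s :=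
          Finset.sum_nonneg fun s' _ => mul_nonneg
            (vvec_nonneg P s₀ _ hP0 (fun s => by simp [gate]; split <;> norm_num) t s') (hP0 s' s)
        have h2 : gate s₀ s ≤ 1 := by simp [gate]; split <;> norm_num
        nlinarith
      calc ∑ s, gate s₀ s * ∑ s', vvec P s₀ (gate s₀) t s' * P s' s
          ≤ ∑ s, ∑ s', vvec P s₀ (gate s₀) t s' * P s' s :=
            Finset.sum_le_sum fun s _ => key s
        _ = ∑ s', vvec P s₀ (gate s₀) t s' := by
            rw [Finset.sum_comm]; simp_rw [← Finset.mul_sum, hP1, mul_one]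
        _ ≤ 1 := ih

lemma gate_nonneg (s₀ : S) : ∀ s, 0 ≤ gate s₀ s := by
  intro s; simp [gate]; split <;> norm_num

lemma fret_nonneg (P : S → S → ℝ) (s₀ : S) (hP0 : ∀ s s', 0 ≤ P s s') :
    ∀ t, 0 ≤ fret P s₀ t := by
  intro t
  cases t with
  | zero => simp [fret]
  | succ t =>
      exact Finset.sum_nonneg fun s' _ => mul_nonneg
        (vvec_nonneg P s₀ _ hP0 (gate_nonneg s₀) t s') (hP0 s' s₀)

lemma fret_le_one (P : S → S → ℝ) (s₀ : S) (hP0 : ∀ s s', 0 ≤ P s s')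
    (hP1 : ∀ s, ∑ s', P s s' = 1) : ∀ t, fret P s₀ t ≤ 1 := by
  intro t
  cases t with
  | zero => simp [fret]
  | succ t =>
      have hPle : ∀ s s', P s s' ≤ 1 := by
        intro s s'
        calc P s s' ≤ ∑ s'', P s s'' :=
              Finset.single_le_sum (fun s'' _ => hP0 s s'') (Finset.mem_univ s')
          _ = 1 := hP1 s
      calc fret P s₀ (t+1) = ∑ s', vvec P s₀ (gate s₀) t s' * P s' s₀ := rfl
        _ ≤ ∑ s', vvec P s₀ (gate s₀) t s' * 1 :=
            Finset.sum_le_sum fun s' _ => mul_le_mul_of_nonneg_left (hPle s' s₀)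
              (vvec_nonneg P s₀ _ hP0 (gate_nonneg s₀) t s')
        _ ≤ 1 := by simpa using sum_vvec_gate_le P s₀ hP0 hP1 t

/-- extension of a finite tuple to `ℕ → S`. -/
def ext (n : ℕ) (v : Fin (n+1) → S) : ℕ → S := fun i => v ⟨min i n, by omega⟩

lemma ext_le {n : ℕ} (v : Fin (n+1) → S) {i : ℕ} (h : i ≤ n) :
    ext n v i = v ⟨i, by omega⟩ := by
  simp [ext, min_eq_left h]

noncomputable def snocEquiv (n : ℕ) : ((Fin n → S) × S) ≃ (Fin (n+1) → S) where
  toFun p := Fin.snoc p.1 p.2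
  invFun v := (Fin.init v, v (Fin.last n))
  left_inv p := by simp [Fin.init_snoc, Fin.snoc_last]
  right_inv v := by simp [Fin.snoc_init_self]

lemma sum_snoc {M : Type*} [AddCommMonoid M] (n : ℕ) (F : (Fin (n+1) → S) → M) :
    ∑ v : Fin (n+1) → S, F v = ∑ u : Fin n → S, ∑ y : S, F (Fin.snoc u y) := by
  calc ∑ v : Fin (n+1) → S, F v
      = ∑ p : (Fin n → S) × S, F (snocEquiv n p) := (Equiv.sum_comp (snocEquiv n) F).symm
    _ = ∑ u : Fin n → S, ∑ y : S, F (snocEquiv n (u, y)) := Fintype.sum_prod_type _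
    _ = ∑ u : Fin n → S, ∑ y : S, F (Fin.snoc u y) := rfl

lemma ext_snoc_le {n : ℕ} (u : Fin (n+1) → S) (y : S) {i : ℕ} (h : i ≤ n) :
    ext (n+1) (Fin.snoc u y) i = ext n u i := by
  rw [ext_le _ (by omega : i ≤ n+1), ext_le _ h]
  have hi : i < n + 1 := by omega
  simp [Fin.snoc, hi]

lemma ext_snoc_last {n : ℕ} (u : Fin (n+1) → S) (y : S) :
    ext (n+1) (Fin.snoc u y) (n+1) = y := by
  rw [ext_le _ (le_refl (n+1))]
  simp [Fin.snoc]

lemma sum_paths (P : S → S → ℝ) (s₀ : S) (g : S → ℝ) :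
    ∀ (n : ℕ) (h : S → ℝ),
      ∑ v : Fin (n+1) → S,
        (if ext n v 0 = s₀ then (1:ℝ) else 0)
          * (∏ i ∈ range n, (P (ext n v i) (ext n v (i+1)) * g (ext n v (i+1))))
          * h (ext n v n)
      = ∑ s, vvec P s₀ g n s * h s := by
  intro n
  induction n with
  | zero =>
      intro h
      have heq := Fintype.sum_equiv (Equiv.funUnique (Fin 1) S)
        (fun v => (if ext 0 v 0 = s₀ then (1:ℝ) else 0)
          * (∏ i ∈ range 0, (P (ext 0 v i) (ext 0 v (i+1)) * g (ext 0 v (i+1))))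
          * h (ext 0 v 0))
        (fun s => (if s = s₀ then (1:ℝ) else 0) * h s)
        (fun v => by simp [ext_le])
      rw [heq]
      apply Finset.sum_congr rfl
      intro s _
      simp
  | succ n ih =>
      intro h
      rw [sum_snoc (n+1)]
      have hterm : ∀ (u : Fin (n+1) → S) (y : S),
          (if ext (n+1) (Fin.snoc u y) 0 = s₀ then (1:ℝ) else 0)
            * (∏ i ∈ range (n+1),
                (P (ext (n+1) (Fin.snoc u y) i) (ext (n+1) (Fin.snoc u y) (i+1))
                  * g (ext (n+1) (Fin.snoc u y) (i+1))))
            * h (ext (n+1) (Fin.snoc u y) (n+1))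
          = (if ext n u 0 = s₀ then (1:ℝ) else 0)
              * (∏ i ∈ range n, (P (ext n u i) (ext n u (i+1)) * g (ext n u (i+1))))
              * (P (ext n u n) y * g y * h y) := by
        intro u y
        rw [Finset.prod_range_succ]
        rw [ext_snoc_le u y (by omega : (0:ℕ) ≤ n), ext_snoc_last, ext_snoc_le u y (le_refl n)]
        have hprod : ∏ i ∈ range n,
            (P (ext (n+1) (Fin.snoc u y) i) (ext (n+1) (Fin.snoc u y) (i+1))
              * g (ext (n+1) (Fin.snoc u y) (i+1)))
            = ∏ i ∈ range n, (P (ext n u i) (ext n u (i+1)) * g (ext n u (i+1))) := by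
          apply Finset.prod_congr rfl
          intro i hi
          rw [mem_range] at hi
          rw [ext_snoc_le u y (by omega : i ≤ n), ext_snoc_le u y (by omega : i + 1 ≤ n)]
        rw [hprod]
        ring
      simp only [hterm]
      have hinner : ∀ u : Fin (n+1) → S,
          ∑ y : S, (if ext n u 0 = s₀ then (1:ℝ) else 0)
            * (∏ i ∈ range n, (P (ext n u i) (ext n u (i+1)) * g (ext n u (i+1))))
            * (P (ext n u n) y * g y * h y)
          = (if ext n u 0 = s₀ then (1:ℝ) else 0)
            * (∏ i ∈ range n, (P (ext n u i) (ext n u (i+1)) * g (ext n u (i+1))))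
            * (∑ y : S, P (ext n u n) y * g y * h y) := by
        intro u
        rw [Finset.mul_sum]
      rw [Finset.sum_congr rfl fun u _ => hinner u]
      rw [ih (fun x => ∑ y : S, P x y * g y * h y)]
      simp_rw [Finset.mul_sum]
      rw [Finset.sum_comm]
      apply Finset.sum_congr rfl
      intro y _
      simp only [vvec_succ, Finset.mul_sum, Finset.sum_mul]
      exact Finset.sum_congr rfl fun s' _ => by ring

variable [MeasurableSpace S] [MeasurableSingletonClass S]

lemma integral_eq_sum (P : S → S → ℝ) (s₀ : S) (μ : Measure (ℕ → S)) [IsProbabilityMeasure μ]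
    (hμ : ∀ (n : ℕ) (s : ℕ → S),
      (μ {ω | ∀ i ≤ n, ω i = s i}).toReal
        = (if s 0 = s₀ then (1 : ℝ) else 0) * ∏ i ∈ range n, P (s i) (s (i + 1)))
    (n : ℕ) (gf : (ℕ → S) → ℝ)
    (hg : ∀ ω ω' : ℕ → S, (∀ i ≤ n, ω i = ω' i) → gf ω = gf ω') :
    ∫ ω, gf ω ∂μ = ∑ v : Fin (n+1) → S, gf (ext n v)
      * ((if ext n v 0 = s₀ then (1:ℝ) else 0)
          * ∏ i ∈ range n, P (ext n v i) (ext n v (i+1))) := by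
  set C : (Fin (n+1) → S) → Set (ℕ → S) := fun v => {ω | ∀ i ≤ n, ω i = ext n v i} with hC
  have hCmeas : ∀ v, MeasurableSet (C v) := by
    intro v
    have : C v = ⋂ i ∈ Set.Iic n, (fun ω : ℕ → S => ω i) ⁻¹' {ext n v i} := by
      ext ω
      simp [hC, Set.mem_iInter]
    rw [this]
    exact MeasurableSet.biInter (Set.to_countable _) fun i _ =>
      (measurable_pi_apply i) (measurableSet_singleton _)
  have hdecomp : ∀ ω, gf ω
      = ∑ v : Fin (n+1) → S, Set.indicator (C v) (fun _ => gf (ext n v)) ω := by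
    intro ω
    have hmem : ω ∈ C (fun i : Fin (n+1) => ω i) := by
      intro i hi
      rw [ext_le _ hi]
    rw [Finset.sum_eq_single (fun i : Fin (n+1) => ω (i : ℕ))]
    · rw [Set.indicator_of_mem hmem]
      apply hg
      intro i hi
      rw [ext_le _ hi]
    · intro v _ hv
      apply Set.indicator_of_notMem
      intro hωv
      apply hv
      funext j
      have := hωv j (by omega : (j : ℕ) ≤ n)
      rw [ext_le _ (by omega : (j:ℕ) ≤ n)] at this
      simp at this ⊢
      exact this.symm
    · intro hn
      exact absurd (Finset.mem_univ _) hn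
  calc ∫ ω, gf ω ∂μ
      = ∫ ω, ∑ v : Fin (n+1) → S, Set.indicator (C v) (fun _ => gf (ext n v)) ω ∂μ := by
        exact integral_congr_ae (Filter.Eventually.of_forall hdecomp)
    _ = ∑ v : Fin (n+1) → S, ∫ ω, Set.indicator (C v) (fun _ => gf (ext n v)) ω ∂μ := by
        apply integral_finset_sum
        exact fun v _ => (integrable_const _).indicator (hCmeas v)
    _ = ∑ v : Fin (n+1) → S, (μ (C v)).toReal • gf (ext n v) := by
        exact Finset.sum_congr rfl fun v _ => integral_indicator_const _ (hCmeas v)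
    _ = ∑ v : Fin (n+1) → S, gf (ext n v)
        * ((if ext n v 0 = s₀ then (1:ℝ) else 0)
            * ∏ i ∈ range n, P (ext n v i) (ext n v (i+1))) := by
        apply Finset.sum_congr rfl
        intro v _
        rw [smul_eq_mul, mul_comm]
        congr 1
        exact hμ n (ext n v)

lemma integral_term (P : S → S → ℝ) (s₀ : S) (μ : Measure (ℕ → S)) [IsProbabilityMeasure μ]
    (hμ : ∀ (n : ℕ) (s : ℕ → S),
      (μ {ω | ∀ i ≤ n, ω i = s i}).toReal
        = (if s 0 = s₀ then (1 : ℝ) else 0) * ∏ i ∈ range n, P (s i) (s (i + 1)))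
    (t : ℕ) (g : S → ℝ) (h2 : S → S → ℝ) :
    ∫ ω, (∏ i ∈ range t, g (ω (i+1))) * h2 (ω t) (ω (t+1)) ∂μ
      = ∑ s, vvec P s₀ g t s * ∑ s', P s s' * h2 s s' := by
  have hg : ∀ ω ω' : ℕ → S, (∀ i ≤ t + 1, ω i = ω' i) →
      (∏ i ∈ range t, g (ω (i+1))) * h2 (ω t) (ω (t+1))
        = (∏ i ∈ range t, g (ω' (i+1))) * h2 (ω' t) (ω' (t+1)) := by
    intro ω ω' hωω
    rw [hωω t (by omega), hωω (t+1) (by omega)]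
    congr 1
    apply Finset.prod_congr rfl
    intro i hi
    rw [mem_range] at hi
    rw [hωω (i+1) (by omega)]
  rw [integral_eq_sum P s₀ μ hμ (t+1) _ hg]
  rw [sum_snoc (t+1)]
  have hterm : ∀ (u : Fin (t+1) → S) (y : S),
      ((∏ i ∈ range t, g (ext (t+1) (Fin.snoc u y) (i+1)))
          * h2 (ext (t+1) (Fin.snoc u y) t) (ext (t+1) (Fin.snoc u y) (t+1)))
        * ((if ext (t+1) (Fin.snoc u y) 0 = s₀ then (1:ℝ) else 0)
            * ∏ i ∈ range (t+1),
                P (ext (t+1) (Fin.snoc u y) i) (ext (t+1) (Fin.snoc u y) (i+1)))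
      = (if ext t u 0 = s₀ then (1:ℝ) else 0)
          * (∏ i ∈ range t, (P (ext t u i) (ext t u (i+1)) * g (ext t u (i+1))))
          * (P (ext t u t) y * h2 (ext t u t) y) := by
    intro u y
    rw [Finset.prod_range_succ]
    rw [ext_snoc_le u y (by omega : (0:ℕ) ≤ t), ext_snoc_last, ext_snoc_le u y (le_refl t)]
    have hp1 : ∏ i ∈ range t, g (ext (t+1) (Fin.snoc u y) (i+1))
        = ∏ i ∈ range t, g (ext t u (i+1)) := by
      apply Finset.prod_congr rfl
      intro i hi
      rw [mem_range] at hi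
      rw [ext_snoc_le u y (by omega : i+1 ≤ t)]
    have hp2 : ∏ i ∈ range t,
        P (ext (t+1) (Fin.snoc u y) i) (ext (t+1) (Fin.snoc u y) (i+1))
        = ∏ i ∈ range t, P (ext t u i) (ext t u (i+1)) := by
      apply Finset.prod_congr rfl
      intro i hi
      rw [mem_range] at hi
      rw [ext_snoc_le u y (by omega : i ≤ t), ext_snoc_le u y (by omega : i+1 ≤ t)]
    rw [hp1, hp2, Finset.prod_mul_distrib]
    ring
  simp only [hterm]
  have hinner : ∀ u : Fin (t+1) → S,
      ∑ y : S, (if ext t u 0 = s₀ then (1:ℝ) else 0)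
          * (∏ i ∈ range t, (P (ext t u i) (ext t u (i+1)) * g (ext t u (i+1))))
          * (P (ext t u t) y * h2 (ext t u t) y)
      = (if ext t u 0 = s₀ then (1:ℝ) else 0)
          * (∏ i ∈ range t, (P (ext t u i) (ext t u (i+1)) * g (ext t u (i+1))))
          * ((fun x => ∑ y : S, P x y * h2 x y) (ext t u t)) := by
    intro u
    rw [← Finset.mul_sum]
  rw [Finset.sum_congr rfl fun u _ => hinner u]
  exact sum_paths P s₀ g t (fun x => ∑ y : S, P x y * h2 x y)

end RenewalAux


section Main

open RenewalAux

/-- **Renewal relationship for discounted performance (Proposition 1,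
closed-loop finite-state form).**
Let `S` be a nonempty finite state space, `P` a Markov (stochastic) transition
kernel on `S` (given in finite-state form by a row-stochastic matrix),
`r : S × S → ℝ` a reward, `γ ∈ (0,1)` a discount factor and `s₀` a designated
start state. Let `μ` be the trajectory law of the Markov chain started at `s₀`
with transitions `P` (characterized by its finite-dimensional cylinder
probabilities, as produced by the Ionescu–Tulcea construction), and let
`τ(ω) = inf {t ≥ 1 : ω_t = s₀}` be the first return time to `s₀`, assumed
finite `μ`-a.s. With
`J = E_μ[∑_{t=0}^∞ γ^t r(X_t, X_{t+1})]`,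
`R = E_μ[∑_{t=0}^{τ−1} γ^t r(X_t, X_{t+1})]` and
`T = E_μ[∑_{t=0}^{τ−1} γ^t]`, we have `T > 0` and `J = R / ((1 − γ) T)`. -/
theorem renewal_relationship_discounted
    {S : Type*} [Fintype S] [Nonempty S]
    [MeasurableSpace S] [MeasurableSingletonClass S]
    (P : S → S → ℝ) (hP0 : ∀ s s', 0 ≤ P s s') (hP1 : ∀ s, ∑ s', P s s' = 1)
    (r : S → S → ℝ) (γ : ℝ) (hγ : γ ∈ Set.Ioo (0 : ℝ) 1) (s₀ : S)
    (μ : Measure (ℕ → S)) [IsProbabilityMeasure μ]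
    (hμ : ∀ (n : ℕ) (s : ℕ → S),
      (μ {ω | ∀ i ≤ n, ω i = s i}).toReal
        = (if s 0 = s₀ then (1 : ℝ) else 0) * ∏ i ∈ range n, P (s i) (s (i + 1)))
    (τ : (ℕ → S) → ℕ)
    (hτ : ∀ ω, τ ω = sInf {t : ℕ | 1 ≤ t ∧ ω t = s₀})
    (hτfin : ∀ᵐ ω ∂μ, ∃ t : ℕ, 1 ≤ t ∧ ω t = s₀)
    (J R T : ℝ)
    (hJ : J = ∫ ω, (∑' t : ℕ, γ ^ t * r (ω t) (ω (t + 1))) ∂μ)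
    (hR : R = ∫ ω, (∑ t ∈ range (τ ω), γ ^ t * r (ω t) (ω (t + 1))) ∂μ)
    (hT : T = ∫ ω, (∑ t ∈ range (τ ω), γ ^ t) ∂μ) :
    0 < T ∧ J = R / ((1 - γ) * T) := by
  obtain ⟨hγ0, hγ1⟩ := hγ
  have Sgeo : Summable (fun t : ℕ => γ ^ t) := summable_geometric_of_lt_one hγ0.le hγ1
  have hPle1 : ∀ s s', P s s' ≤ 1 := by
    intro s s'
    calc P s s' ≤ ∑ s'', P s s'' :=
          Finset.single_le_sum (fun s'' _ => hP0 s s'') (Finset.mem_univ s')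
      _ = 1 := hP1 s
  -- bound helper for ρ
  have hρbound : ∀ (rr : S → S → ℝ) (s : S),
      |∑ s', P s s' * rr s s'| ≤ ∑ a, ∑ b, |rr a b| := by
    intro rr s
    calc |∑ s', P s s' * rr s s'| ≤ ∑ s', |P s s' * rr s s'| := Finset.abs_sum_le_sum_abs _ _
      _ ≤ ∑ s', |rr s s'| := by
          apply Finset.sum_le_sum
          intro s' _
          rw [abs_mul, abs_of_nonneg (hP0 s s')]
          nlinarith [abs_nonneg (rr s s'), hPle1 s s', hP0 s s']
      _ ≤ ∑ a, ∑ b, |rr a b| :=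
          Finset.single_le_sum (f := fun a => ∑ b, |rr a b|)
            (fun a _ => Finset.sum_nonneg fun b _ => abs_nonneg _) (Finset.mem_univ s)
  -- bounded weighted sums
  have hwsum : ∀ (rr : S → S → ℝ) (w : S → ℝ), (∀ s, 0 ≤ w s) → (∑ s, w s) ≤ 1 →
      |∑ s, w s * ∑ s', P s s' * rr s s'| ≤ ∑ a, ∑ b, |rr a b| := by
    intro rr w hw0 hw1
    have hC0 : 0 ≤ ∑ a, ∑ b, |rr a b| :=
      Finset.sum_nonneg fun a _ => Finset.sum_nonneg fun b _ => abs_nonneg _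
    calc |∑ s, w s * ∑ s', P s s' * rr s s'|
        ≤ ∑ s, |w s * ∑ s', P s s' * rr s s'| := Finset.abs_sum_le_sum_abs _ _
      _ ≤ ∑ s, w s * (∑ a, ∑ b, |rr a b|) := by
          apply Finset.sum_le_sum
          intro s _
          rw [abs_mul, abs_of_nonneg (hw0 s)]
          exact mul_le_mul_of_nonneg_left (hρbound rr s) (hw0 s)
      _ = (∑ s, w s) * (∑ a, ∑ b, |rr a b|) := by rw [Finset.sum_mul]
      _ ≤ 1 * (∑ a, ∑ b, |rr a b|) := mul_le_mul_of_nonneg_right hw1 hC0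
      _ = ∑ a, ∑ b, |rr a b| := one_mul _
  -- swap lemma
  have hswap : ∀ (f : ℕ → (ℕ → S) → ℝ) (c : ℝ), 0 ≤ c → (∀ t, Measurable (f t)) →
      (∀ t ω, ‖f t ω‖ ≤ c * γ ^ t) →
      ∫ ω, (∑' t, f t ω) ∂μ = ∑' t, ∫ ω, f t ω ∂μ := by
    intro f c hc hmeas hbd
    apply integral_tsum (fun t => (hmeas t).aestronglyMeasurable)
    have hle : ∀ t : ℕ, ∫⁻ ω, ‖f t ω‖₊ ∂μ ≤ ENNReal.ofReal (c * γ ^ t) := by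
      intro t
      calc ∫⁻ ω, (‖f t ω‖₊ : ENNReal) ∂μ
          ≤ ∫⁻ _ω, ENNReal.ofReal (c * γ ^ t) ∂μ := by
            apply lintegral_mono
            intro ω
            show (‖f t ω‖₊ : ENNReal) ≤ ENNReal.ofReal (c * γ ^ t)
            rw [← ENNReal.ofReal_coe_nnreal, coe_nnnorm]
            exact ENNReal.ofReal_le_ofReal (hbd t ω)
        _ = ENNReal.ofReal (c * γ ^ t) := by simp
    have hsum : (∑' t, ∫⁻ ω, ‖f t ω‖₊ ∂μ) ≤ ∑' t : ℕ, ENNReal.ofReal (c * γ ^ t) :=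
      ENNReal.tsum_le_tsum hle
    have heq : ∑' t : ℕ, ENNReal.ofReal (c * γ ^ t) = ENNReal.ofReal (∑' t : ℕ, c * γ ^ t) :=
      (ENNReal.ofReal_tsum_of_nonneg (fun t => by positivity) (Sgeo.mul_left c)).symm
    exact ne_of_lt (lt_of_le_of_lt hsum (heq ▸ ENNReal.ofReal_lt_top))
  -- pulling a constant out of the reward sums
  have hpull : ∀ (rr : S → S → ℝ) (w : S → ℝ) (c : ℝ),
      ∑ s, w s * ∑ s', P s s' * (c * rr s s')
        = c * ∑ s, w s * ∑ s', P s s' * rr s s' := by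
    intro rr w c
    rw [Finset.mul_sum]
    apply Finset.sum_congr rfl
    intro s _
    have : ∑ s', P s s' * (c * rr s s') = c * ∑ s', P s s' * rr s s' := by
      rw [Finset.mul_sum]
      exact Finset.sum_congr rfl fun s' _ => by ring
    rw [this]
    ring
  -- identification of J
  have hmeas_r : ∀ (rr : S → S → ℝ) (t : ℕ),
      Measurable (fun ω : ℕ → S => rr (ω t) (ω (t+1))) := by
    intro rr t
    have hpair : Measurable (fun ω : ℕ → S => (ω t, ω (t+1))) :=
      (measurable_pi_apply t).prodMk (measurable_pi_apply (t+1))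
    exact (measurable_of_countable (fun p : S × S => rr p.1 p.2)).comp hpair
  have hterm_val : ∀ (rr : S → S → ℝ) (t : ℕ),
      ∫ ω, γ ^ t * rr (ω t) (ω (t + 1)) ∂μ
        = γ ^ t * ∑ s, vvec P s₀ (fun _ => 1) t s * ∑ s', P s s' * rr s s' := by
    intro rr t
    have h := RenewalAux.integral_term P s₀ μ hμ t (fun _ => (1:ℝ))
      (fun x y => γ ^ t * rr x y)
    simp only [Finset.prod_const_one, one_mul] at h
    rw [h, hpull]
  have hJeq : J = ∑' t : ℕ, γ ^ t * ∑ s, vvec P s₀ (fun _ => 1) t s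
      * ∑ s', P s s' * r s s' := by
    rw [hJ]
    rw [hswap (fun t ω => γ ^ t * r (ω t) (ω (t+1))) ((∑ a, ∑ b, |r a b|) + 1)
      (by positivity)
      (fun t => measurable_const.mul (hmeas_r r t))
      ?_]
    · exact tsum_congr fun t => hterm_val r t
    · intro t ω
      have h1 : |r (ω t) (ω (t+1))| ≤ (∑ a, ∑ b, |r a b|) := by
        calc |r (ω t) (ω (t+1))| ≤ ∑ b, |r (ω t) b| :=
              Finset.single_le_sum (f := fun b => |r (ω t) b|)
                (fun b _ => abs_nonneg _) (Finset.mem_univ _)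
          _ ≤ ∑ a, ∑ b, |r a b| :=
              Finset.single_le_sum (f := fun a => ∑ b, |r a b|)
                (fun a _ => Finset.sum_nonneg fun b _ => abs_nonneg _) (Finset.mem_univ _)
      have h2 : (0:ℝ) ≤ γ ^ t := by positivity
      rw [Real.norm_eq_abs, abs_mul, abs_pow, abs_of_pos hγ0]
      nlinarith

  -- generic identification for stopped sums
  have hRgen : ∀ rr : S → S → ℝ,
      ∫ ω, (∑ t ∈ range (τ ω), γ ^ t * rr (ω t) (ω (t + 1))) ∂μ
        = ∑' t : ℕ, γ ^ t * ∑ s, vvec P s₀ (gate s₀) t s * ∑ s', P s s' * rr s s' := by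
    intro rr
    set fR : ℕ → (ℕ → S) → ℝ := fun t ω =>
      (∏ i ∈ range t, gate s₀ (ω (i+1))) * (γ ^ t * rr (ω t) (ω (t+1))) with hfR
    have habs : ∀ (x y : S), |rr x y| ≤ ∑ a, ∑ b, |rr a b| := by
      intro x y
      calc |rr x y| ≤ ∑ b, |rr x b| :=
            Finset.single_le_sum (f := fun b => |rr x b|)
              (fun b _ => abs_nonneg _) (Finset.mem_univ _)
        _ ≤ ∑ a, ∑ b, |rr a b| :=
            Finset.single_le_sum (f := fun a => ∑ b, |rr a b|)
              (fun a _ => Finset.sum_nonneg fun b _ => abs_nonneg _) (Finset.mem_univ _)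
    have hprodmem : ∀ (t : ℕ) (ω : ℕ → S),
        0 ≤ (∏ i ∈ range t, gate s₀ (ω (i+1)))
          ∧ (∏ i ∈ range t, gate s₀ (ω (i+1))) ≤ 1 := by
      intro t ω
      constructor
      · exact Finset.prod_nonneg fun i _ => gate_nonneg s₀ _
      · apply Finset.prod_le_one (fun i _ => gate_nonneg s₀ _)
        intro i _
        simp only [RenewalAux.gate]
        split <;> norm_num
    have h1 : (fun ω => ∑ t ∈ range (τ ω), γ ^ t * rr (ω t) (ω (t + 1)))
        =ᵐ[μ] fun ω => ∑' t, fR t ω := by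
      filter_upwards [hτfin] with ω hω
      have hτω : ∀ t, t < τ ω ↔ ∀ i, i < t → ω (i+1) ≠ s₀ := by
        intro t
        rw [hτ ω]
        constructor
        · intro hlt i hi hcon
          have hmem : (i+1) ∈ {t : ℕ | 1 ≤ t ∧ ω t = s₀} := ⟨by omega, hcon⟩
          have := Nat.sInf_le hmem
          omega
        · intro hall
          by_contra hle
          push_neg at hle
          obtain ⟨h1', h2'⟩ := Nat.sInf_mem (s := {t : ℕ | 1 ≤ t ∧ ω t = s₀}) hω
          have hi : sInf {t : ℕ | 1 ≤ t ∧ ω t = s₀} - 1 < t := by omega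
          apply hall _ hi
          have heq : sInf {t : ℕ | 1 ≤ t ∧ ω t = s₀} - 1 + 1
              = sInf {t : ℕ | 1 ≤ t ∧ ω t = s₀} := by omega
          rw [heq]
          exact h2'
      have hgp : ∀ t, (∏ i ∈ range t, gate s₀ (ω (i+1)))
          = if t < τ ω then (1:ℝ) else 0 := by
        intro t
        by_cases hlt : t < τ ω
        · rw [if_pos hlt]
          apply Finset.prod_eq_one
          intro i hi
          rw [mem_range] at hi
          have := (hτω t).1 hlt i hi
          simp [RenewalAux.gate, this]
        · rw [if_neg hlt]
          have hne : ¬ ∀ i, i < t → ω (i+1) ≠ s₀ := fun h => hlt ((hτω t).2 h)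
          push_neg at hne
          obtain ⟨i, hi, hieq⟩ := hne
          exact Finset.prod_eq_zero (Finset.mem_range.2 hi)
            (by simp [RenewalAux.gate, hieq])
      have hsupp : ∀ t ∉ range (τ ω), fR t ω = 0 := by
        intro t ht
        rw [mem_range] at ht
        simp only [hfR]
        rw [hgp t, if_neg (by omega)]
        ring
      rw [tsum_eq_sum hsupp]
      apply Finset.sum_congr rfl
      intro t ht
      rw [mem_range] at ht
      simp only [hfR]
      rw [hgp t, if_pos ht, one_mul]
    rw [integral_congr_ae h1]
    have hmeasR : ∀ t, Measurable (fR t) := by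
      intro t
      apply Measurable.mul
      · apply Finset.measurable_prod
        intro i _
        exact (measurable_of_countable (gate s₀)).comp (measurable_pi_apply (i+1))
      · exact measurable_const.mul (hmeas_r rr t)
    have hbdR : ∀ (t : ℕ) (ω : ℕ → S), ‖fR t ω‖ ≤ ((∑ a, ∑ b, |rr a b|) + 1) * γ ^ t := by
      intro t ω
      obtain ⟨hp0, hp1⟩ := hprodmem t ω
      have h2 : (0:ℝ) < γ ^ t := pow_pos hγ0 t
      have h3 := habs (ω t) (ω (t+1))
      have h4 : (0:ℝ) ≤ |rr (ω t) (ω (t+1))| := abs_nonneg _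
      simp only [hfR, Real.norm_eq_abs]
      rw [abs_mul, abs_mul, abs_pow, abs_of_pos hγ0, abs_of_nonneg hp0]
      calc (∏ i ∈ range t, gate s₀ (ω (i+1))) * (γ ^ t * |rr (ω t) (ω (t+1))|)
          ≤ 1 * (γ ^ t * |rr (ω t) (ω (t+1))|) :=
            mul_le_mul_of_nonneg_right hp1 (by positivity)
        _ = γ ^ t * |rr (ω t) (ω (t+1))| := one_mul _
        _ ≤ γ ^ t * ((∑ a, ∑ b, |rr a b|) + 1) :=
            mul_le_mul_of_nonneg_left (by linarith) h2.le
        _ = ((∑ a, ∑ b, |rr a b|) + 1) * γ ^ t := mul_comm _ _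
    rw [hswap fR ((∑ a, ∑ b, |rr a b|) + 1) (by positivity) hmeasR hbdR]
    apply tsum_congr
    intro t
    have h := RenewalAux.integral_term P s₀ μ hμ t (gate s₀) (fun x y => γ ^ t * rr x y)
    calc ∫ ω, fR t ω ∂μ
        = ∑ s, vvec P s₀ (gate s₀) t s * ∑ s', P s s' * (γ ^ t * rr s s') := h
      _ = γ ^ t * ∑ s, vvec P s₀ (gate s₀) t s * ∑ s', P s s' * rr s s' := hpull rr _ _
  -- the main renewal series identity
  have main : ∀ rr : S → S → ℝ,
      (∑' t : ℕ, γ ^ t * ∑ s, vvec P s₀ (fun _ => 1) t s * ∑ s', P s s' * rr s s')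
        = (∑' t : ℕ, γ ^ t * ∑ s, vvec P s₀ (gate s₀) t s * ∑ s', P s s' * rr s s')
          + (∑' k : ℕ, γ ^ k * fret P s₀ k)
            * (∑' t : ℕ, γ ^ t * ∑ s, vvec P s₀ (fun _ => 1) t s
                * ∑ s', P s s' * rr s s') := by
    intro rr
    set A : ℕ → ℝ := fun t => γ ^ t * ∑ s, vvec P s₀ (fun _ => 1) t s
      * ∑ s', P s s' * rr s s' with hA
    set B : ℕ → ℝ := fun t => γ ^ t * ∑ s, vvec P s₀ (gate s₀) t s
      * ∑ s', P s s' * rr s s' with hB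
    set F : ℕ → ℝ := fun k => γ ^ k * fret P s₀ k with hF
    have hAbd : ∀ t, ‖A t‖ ≤ (∑ a, ∑ b, |rr a b|) * γ ^ t := by
      intro t
      have hw := hwsum rr (fun s => vvec P s₀ (fun _ => 1) t s)
        (fun s => vvec_nonneg P s₀ _ hP0 (fun _ => zero_le_one) t s)
        (le_of_eq (sum_vvec_one P s₀ hP1 t))
      simp only [hA, Real.norm_eq_abs]
      rw [abs_mul, abs_pow, abs_of_pos hγ0]
      calc γ ^ t * |∑ s, vvec P s₀ (fun _ => 1) t s * ∑ s', P s s' * rr s s'|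
          ≤ γ ^ t * (∑ a, ∑ b, |rr a b|) :=
            mul_le_mul_of_nonneg_left hw (by positivity)
        _ = (∑ a, ∑ b, |rr a b|) * γ ^ t := mul_comm _ _
    have hBbd : ∀ t, ‖B t‖ ≤ (∑ a, ∑ b, |rr a b|) * γ ^ t := by
      intro t
      have hw := hwsum rr (fun s => vvec P s₀ (gate s₀) t s)
        (fun s => vvec_nonneg P s₀ _ hP0 (gate_nonneg s₀) t s)
        (sum_vvec_gate_le P s₀ hP0 hP1 t)
      simp only [hB, Real.norm_eq_abs]
      rw [abs_mul, abs_pow, abs_of_pos hγ0]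
      calc γ ^ t * |∑ s, vvec P s₀ (gate s₀) t s * ∑ s', P s s' * rr s s'|
          ≤ γ ^ t * (∑ a, ∑ b, |rr a b|) :=
            mul_le_mul_of_nonneg_left hw (by positivity)
        _ = (∑ a, ∑ b, |rr a b|) * γ ^ t := mul_comm _ _
    have hFbd : ∀ k, ‖F k‖ ≤ 1 * γ ^ k := by
      intro k
      simp only [hF, Real.norm_eq_abs]
      rw [abs_mul, abs_pow, abs_of_pos hγ0,
        abs_of_nonneg (fret_nonneg P s₀ hP0 k), one_mul]
      calc γ ^ k * fret P s₀ k ≤ γ ^ k * 1 :=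
            mul_le_mul_of_nonneg_left (fret_le_one P s₀ hP0 hP1 k) (by positivity)
        _ = γ ^ k := mul_one _
    have SA : Summable fun t => ‖A t‖ :=
      Summable.of_nonneg_of_le (fun _ => norm_nonneg _) hAbd
        (Sgeo.mul_left (∑ a, ∑ b, |rr a b|))
    have SB : Summable fun t => ‖B t‖ :=
      Summable.of_nonneg_of_le (fun _ => norm_nonneg _) hBbd
        (Sgeo.mul_left (∑ a, ∑ b, |rr a b|))
    have SF : Summable fun k => ‖F k‖ :=
      Summable.of_nonneg_of_le (fun _ => norm_nonneg _) hFbd (Sgeo.mul_left 1)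
    have SA' : Summable A := SA.of_norm
    have SB' : Summable B := SB.of_norm
    have hconv : ∀ t, A t - B t = ∑ k ∈ range (t+1), F k * A (t - k) := by
      intro t
      have hsplit : ∑ s, vvec P s₀ (fun _ => 1) t s * ∑ s', P s s' * rr s s'
          = (∑ s, vvec P s₀ (gate s₀) t s * ∑ s', P s s' * rr s s')
            + ∑ k ∈ range (t+1), fret P s₀ k *
                ∑ s, vvec P s₀ (fun _ => 1) (t-k) s * ∑ s', P s s' * rr s s' := by
        calc ∑ s, vvec P s₀ (fun _ => 1) t s * ∑ s', P s s' * rr s s'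
            = ∑ s, (vvec P s₀ (gate s₀) t s
                + ∑ k ∈ range (t+1), fret P s₀ k * vvec P s₀ (fun _ => 1) (t-k) s)
                * ∑ s', P s s' * rr s s' := by
              apply Finset.sum_congr rfl
              intro s _
              rw [renewal P s₀ t s]
          _ = (∑ s, vvec P s₀ (gate s₀) t s * ∑ s', P s s' * rr s s')
              + ∑ s, ∑ k ∈ range (t+1),
                  fret P s₀ k * vvec P s₀ (fun _ => 1) (t-k) s * ∑ s', P s s' * rr s s' := by
              rw [← Finset.sum_add_distrib]
              apply Finset.sum_congr rfl
              intro s _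
              rw [add_mul, Finset.sum_mul]
          _ = (∑ s, vvec P s₀ (gate s₀) t s * ∑ s', P s s' * rr s s')
              + ∑ k ∈ range (t+1), fret P s₀ k *
                  ∑ s, vvec P s₀ (fun _ => 1) (t-k) s * ∑ s', P s s' * rr s s' := by
              congr 1
              rw [Finset.sum_comm]
              apply Finset.sum_congr rfl
              intro k _
              rw [Finset.mul_sum]
              apply Finset.sum_congr rfl
              intro s _
              ring
      simp only [hA, hB, hF]
      rw [hsplit, mul_add, add_sub_cancel_left, Finset.mul_sum]
      apply Finset.sum_congr rfl
      intro k hk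
      rw [mem_range] at hk
      have hpow : γ ^ t = γ ^ k * γ ^ (t - k) := by
        rw [← pow_add]
        congr 1
        omega
      rw [hpow]
      ring
    have hcp : (∑' k, F k) * (∑' t, A t) = ∑' t, ∑ k ∈ range (t+1), F k * A (t - k) :=
      tsum_mul_tsum_eq_tsum_sum_range_of_summable_norm SF SA
    have hsub : ∑' t, (A t - B t) = (∑' t, A t) - ∑' t, B t := Summable.tsum_sub SA' SB'
    have hfin : (∑' t, A t) - (∑' t, B t) = (∑' k, F k) * (∑' t, A t) := by
      rw [← hsub, tsum_congr hconv, ← hcp]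
    linarith [hfin]
  -- specializations
  have hReq : R = ∑' t : ℕ, γ ^ t * ∑ s, vvec P s₀ (gate s₀) t s
      * ∑ s', P s s' * r s s' := by
    rw [hR]; exact hRgen r
  have hTgen := hRgen (fun _ _ => (1:ℝ))
  simp only [mul_one, hP1] at hTgen
  have hTeq : T = ∑' t : ℕ, γ ^ t * ∑ s, vvec P s₀ (gate s₀) t s := by
    rw [hT, ← hTgen]
  have hmainr := main r
  have hmain1 := main (fun _ _ => (1:ℝ))
  simp only [mul_one, hP1, sum_vvec_one P s₀ hP1] at hmain1
  have hgeo : ∑' t : ℕ, γ ^ t = (1 - γ)⁻¹ := tsum_geometric_of_lt_one hγ0.le hγ1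
  rw [hgeo] at hmain1
  -- T ≥ 1
  have hTsummand : Summable (fun t : ℕ => γ ^ t * ∑ s, vvec P s₀ (gate s₀) t s) := by
    apply Summable.of_nonneg_of_le
      (fun t => mul_nonneg (by positivity)
        (Finset.sum_nonneg fun s _ => vvec_nonneg P s₀ _ hP0 (gate_nonneg s₀) t s))
      (fun t => ?_) Sgeo
    calc γ ^ t * ∑ s, vvec P s₀ (gate s₀) t s ≤ γ ^ t * 1 :=
          mul_le_mul_of_nonneg_left (sum_vvec_gate_le P s₀ hP0 hP1 t) (by positivity)
      _ = γ ^ t := mul_one _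
  have hT1 : 1 ≤ T := by
    rw [hTeq]
    have h0 : (fun t : ℕ => γ ^ t * ∑ s, vvec P s₀ (gate s₀) t s) 0 = 1 := by
      simp
    rw [← h0]
    apply Summable.le_tsum hTsummand 0
    intro j _
    exact mul_nonneg (by positivity)
      (Finset.sum_nonneg fun s _ => vvec_nonneg P s₀ _ hP0 (gate_nonneg s₀) j s)
  have hTpos : 0 < T := lt_of_lt_of_le one_pos hT1
  refine ⟨hTpos, ?_⟩
  -- algebra
  have h1γ : (0:ℝ) < 1 - γ := by linarith
  have hG : (1 - γ) * T = 1 - ∑' k : ℕ, γ ^ k * fret P s₀ k := by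
    rw [hTeq]
    have := hmain1
    field_simp at this
    linarith [this]
  have hJR : J = R + (∑' k : ℕ, γ ^ k * fret P s₀ k) * J := by
    rw [hJeq, hReq]
    exact hmainr
  have hne : (1 - γ) * T ≠ 0 := by positivity
  rw [eq_div_iff hne]
  linear_combination hJR + J * hG


end Main
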